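/- Let x(k+1) = A(k)x(k) be a non-singular N-periodic linear system over a field K. A Floquet transform exists — i.e., there exist invertible N-periodic matrices P(k) (P(k+N) = P(k)) and a constant matrix Ã with Ã = P(k+1) A(k) P(k)⁻¹ for all k — if and only if the monodromy matrix Φ = A(N−1)⋯A(1)A(0) admits an N-th root over K (a matrix B with B^N = Φ). -/
import Mathlib


open Matrix

theorem floquet_exists_iff_monodromy_has_root
    (K : Type*) [Field K] (n N : ℕ) (hN : 0 < N)
    (A : ℕ → Matrix (Fin n) (Fin n) K)
    (hper : ∀ k, A (k + N) = A k)
    (hns : ∀ k, IsUnit (A k)) :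
    (∃ (P : ℕ → Matrix (Fin n) (Fin n) K) (Atil : Matrix (Fin n) (Fin n) K),
        (∀ k, IsUnit (P k)) ∧ (∀ k, P (k + N) = P k) ∧
        (∀ k, Atil = P (k + 1) * A k * (P k)⁻¹)) ↔
    (∃ B : Matrix (Fin n) (Fin n) K,
        B ^ N = ((List.range N).reverse.map A).prod) := by
  set X : ℕ → Matrix (Fin n) (Fin n) K := fun k => ((List.range k).reverse.map A).prod with hX
  have hX0 : X 0 = 1 := by simp [hX]
  have hXsucc : ∀ k, X (k + 1) = A k * X k := by
    intro k
    simp [hX, List.range_succ]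
  have hXunit : ∀ k, IsUnit (X k) := by
    intro k
    induction k with
    | zero => simp [hX0]
    | succ k ih => rw [hXsucc]; exact (hns k).mul ih
  constructor
  · rintro ⟨P, Atil, hPu, hPper, hAtil⟩
    have hP0 : (P 0)⁻¹ * P 0 = 1 :=
      nonsing_inv_mul _ ((isUnit_iff_isUnit_det _).mp (hPu 0))
    have hP0' : P 0 * (P 0)⁻¹ = 1 :=
      mul_nonsing_inv _ ((isUnit_iff_isUnit_det _).mp (hPu 0))
    have key : ∀ k, Atil ^ k * P 0 = P k * X k := by
      intro k
      induction k with
      | zero => simp [hX0]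
      | succ k ih =>
        rw [pow_succ', mul_assoc, ih, hAtil k, hXsucc]
        have h1 : (P k)⁻¹ * P k = 1 :=
          nonsing_inv_mul _ ((isUnit_iff_isUnit_det _).mp (hPu k))
        rw [mul_assoc (P (k+1) * A k), ← mul_assoc ((P k)⁻¹), h1, one_mul, mul_assoc]
    refine ⟨(P 0)⁻¹ * Atil * P 0, ?_⟩
    have hpow : ∀ k, ((P 0)⁻¹ * Atil * P 0) ^ k = (P 0)⁻¹ * Atil ^ k * P 0 := by
      intro k
      induction k with
      | zero => simp [hP0]
      | succ k ih =>
        rw [pow_succ, ih, pow_succ]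
        simp only [mul_assoc]
        rw [mul_nonsing_inv_cancel_left _ _ ((isUnit_iff_isUnit_det _).mp (hPu 0))]
    have hN' : Atil ^ N * P 0 = P 0 * X N := by
      have := key N
      rwa [show P N = P 0 by have := hPper 0; simpa using this] at this
    rw [hpow, mul_assoc, hN', ← mul_assoc, hP0, one_mul]
  · rintro ⟨B, hB⟩
    have hXNunit : IsUnit (X N) := hXunit N
    have hBu : IsUnit B := by
      have : IsUnit (B ^ N) := by rw [hB]; exact hXNunit
      exact isUnit_pow_iff hN.ne' |>.mp this
    refine ⟨fun k => B ^ k * (X k)⁻¹, B, ?_, ?_, ?_⟩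
    · intro k
      exact (hBu.pow k).mul
        ((isUnit_iff_isUnit_det _).mpr
          (isUnit_nonsing_inv_det _ ((isUnit_iff_isUnit_det _).mp (hXunit k))))
    · intro k
      show B ^ (k + N) * (X (k + N))⁻¹ = B ^ k * (X k)⁻¹
      have hXadd : X (k + N) = X k * X N := by
        induction k with
        | zero => simp [hX0]
        | succ k ih =>
          have : k + 1 + N = (k + N) + 1 := by ring
          rw [this, hXsucc, ih, hper k, ← mul_assoc, ← hXsucc]
      rw [hXadd, Matrix.mul_inv_rev, pow_add, hB,
        mul_assoc (B ^ k), ← mul_assoc (X N),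
        mul_nonsing_inv _ ((isUnit_iff_isUnit_det _).mp hXNunit), one_mul]
    · intro k
      show B = B ^ (k + 1) * (X (k + 1))⁻¹ * A k * (B ^ k * (X k)⁻¹)⁻¹
      have hPk : (B ^ k * (X k)⁻¹)⁻¹ = X k * (B ^ k)⁻¹ := by
        rw [Matrix.mul_inv_rev,
          nonsing_inv_nonsing_inv _ ((isUnit_iff_isUnit_det _).mp (hXunit k))]
      have hBk : B ^ k * (B ^ k)⁻¹ = 1 :=
        mul_nonsing_inv _ ((isUnit_iff_isUnit_det _).mp (hBu.pow k))
      rw [hPk, hXsucc, Matrix.mul_inv_rev, pow_succ']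
      simp only [mul_assoc]
      rw [nonsing_inv_mul_cancel_left _ _ ((isUnit_iff_isUnit_det _).mp (hns k)),
        nonsing_inv_mul_cancel_left _ _ ((isUnit_iff_isUnit_det _).mp (hXunit k)),
        hBk, mul_one]
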